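/- Let q ≥ 2, k = 2, and identify the alphabet with Z_q = {0,1,…,q−1}. For τ ∈ Z_q let f_τ : Z_q² → {0,1} be f_τ(x,y) = 1 iff x − y ≡ τ (mod q), and let F = {f : Z_q² → {0,1} : f^{−1}(1) is the graph of a bijection of Z_q} (the Unique Games family; each f_τ ∈ F). Let D^Y be the uniform distribution on {(f_τ, (σ+τ, σ)) : σ,τ ∈ Z_q} (addition mod q) and D^N the uniform distribution on {f_τ : τ ∈ Z_q} × Z_q². Then: (i) D^Y ∈ S_1^Y(F); (ii) for every assignment b ∈ Z_q^{2×q}, E_{(f,a)∼D^N}[C(f,a)(b)] = 1/q, and consequently D^N ∈ S_{1/q}^N(F); and (iii) μ(D^Y) = μ(D^N). -/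

import Mathlib

open scoped Classical

/-- `D` is a probability distribution on the finite type `Ω`. -/
def IsDist {Ω : Type*} [Fintype Ω] (D : Ω → ℝ) : Prop :=
  (∀ x, 0 ≤ D x) ∧ ∑ x, D x = 1

/-- The value `C(f,a)(b)` of the constraint `(f,a)` on the assignment
`b = (b_{i,σ})` to the `k × q` variables (alphabet `A`). -/
def cVal {A : Type*} {k : ℕ} (f : (Fin k → A) → Bool) (a : Fin k → A)
    (b : Fin k → A → A) : ℝ :=
  if f (fun i => b i (a i)) then 1 else 0

/-- The planted assignment `𝕀` with `𝕀_{i,σ} = σ`. -/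
def planted (A : Type*) (k : ℕ) : Fin k → A → A := fun _ σ => σ

/-- The set `S_γ^Y(F)` of YES distributions. -/
noncomputable def SY {A : Type*} [Fintype A] {k : ℕ}
    (F : Finset ((Fin k → A) → Bool)) (γ : ℝ) :
    Set ((↥F × (Fin k → A)) → ℝ) :=
  {D | IsDist D ∧
    γ ≤ ∑ p : ↥F × (Fin k → A), D p * cVal (p.1 : (Fin k → A) → Bool) p.2 (planted A k)}

/-- The set `S_β^N(F)` of NO distributions. -/
noncomputable def SN {A : Type*} [Fintype A] {k : ℕ}
    (F : Finset ((Fin k → A) → Bool)) (β : ℝ) :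
    Set ((↥F × (Fin k → A)) → ℝ) :=
  {D | IsDist D ∧ ∀ P : A → A → ℝ, (∀ σ, IsDist (P σ)) →
    (∑ p : ↥F × (Fin k → A), D p *
      ∑ b : Fin k → A → A,
        (∏ i, ∏ σ, P σ (b i σ)) * cVal (p.1 : (Fin k → A) → Bool) p.2 b) ≤ β}

/-- The marginal vector `μ(D)` of a distribution `D` on `F × A^k`. -/
noncomputable def marginal {A : Type*} [Fintype A] {k : ℕ}
    (F : Finset ((Fin k → A) → Bool)) (D : ↥F × (Fin k → A) → ℝ) :
    ↥F × Fin k × A → ℝ :=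
  fun x => ∑ a : Fin k → A, if a x.2.1 = x.2.2 then D (x.1, a) else 0

/-- The Unique Games constraint `f_τ(x,y) = 1` iff `x − y = τ` in `Z_q`. -/
def fUG (q : ℕ) (τ : ZMod q) : (Fin 2 → ZMod q) → Bool :=
  fun a => decide (a 0 - a 1 = τ)

/-- The Unique Games family: all constraints whose set of satisfying assignments is the
graph of a bijection of `Z_q`. -/
noncomputable def UGFamily (q : ℕ) [NeZero q] : Finset ((Fin 2 → ZMod q) → Bool) :=
  Finset.univ.filter fun f => ∃ π : Equiv.Perm (ZMod q), ∀ a, f a = true ↔ a 0 = π (a 1)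

/-- The YES distribution for Unique Games: uniform on `{(f_τ, (σ+τ, σ)) : σ, τ ∈ Z_q}`. -/
noncomputable def ugDY (q : ℕ) [NeZero q] :
    ↥(UGFamily q) × (Fin 2 → ZMod q) → ℝ :=
  fun p =>
    if ∃ σ τ : ZMod q, (p.1 : (Fin 2 → ZMod q) → Bool) = fUG q τ ∧ p.2 = ![σ + τ, σ]
    then ((q : ℝ) ^ 2)⁻¹ else 0

/-- The NO distribution for Unique Games: uniform on `{f_τ : τ ∈ Z_q} × Z_q²`. -/
noncomputable def ugDN (q : ℕ) [NeZero q] :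
    ↥(UGFamily q) × (Fin 2 → ZMod q) → ℝ :=
  fun p =>
    if ∃ τ : ZMod q, (p.1 : (Fin 2 → ZMod q) → Bool) = fUG q τ
    then ((q : ℝ) ^ 3)⁻¹ else 0

-- AUX

lemma fUG_mem (q : ℕ) [NeZero q] (τ : ZMod q) : fUG q τ ∈ UGFamily q := by
  simp only [UGFamily, Finset.mem_filter, Finset.mem_univ, true_and]
  refine ⟨Equiv.addRight τ, fun a => ?_⟩
  simp [fUG, sub_eq_iff_eq_add, add_comm]

lemma fUG_inj (q : ℕ) [NeZero q] : Function.Injective (fUG q) := by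
  intro τ τ' h
  have h1 : fUG q τ ![τ, 0] = true := by simp [fUG]
  rw [h] at h1
  simpa [fUG] using h1

noncomputable def eUG (q : ℕ) [NeZero q] (τ : ZMod q) : ↥(UGFamily q) :=
  ⟨fUG q τ, fUG_mem q τ⟩

lemma eUG_inj (q : ℕ) [NeZero q] : Function.Injective (eUG q) := fun a b h =>
  fUG_inj q (congrArg Subtype.val h)

lemma sumDN (q : ℕ) [NeZero q] (g : ↥(UGFamily q) × (Fin 2 → ZMod q) → ℝ) :
    ∑ p : ↥(UGFamily q) × (Fin 2 → ZMod q), ugDN q p * g p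
      = ((q:ℝ)^3)⁻¹ * ∑ τ : ZMod q, ∑ a : Fin 2 → ZMod q, g (eUG q τ, a) := by
  rw [Fintype.sum_prod_type]
  have key : ∀ f : ↥(UGFamily q), (∑ a : Fin 2 → ZMod q, ugDN q (f, a) * g (f, a))
      = if f ∈ Finset.image (eUG q) Finset.univ then ((q:ℝ)^3)⁻¹ * ∑ a, g (f, a) else 0 := by
    intro f
    by_cases h : ∃ τ, (f : (Fin 2 → ZMod q) → Bool) = fUG q τ
    · have hf : f ∈ Finset.image (eUG q) Finset.univ := by
        obtain ⟨τ, hτ⟩ := h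
        exact Finset.mem_image.2 ⟨τ, Finset.mem_univ τ, Subtype.ext hτ.symm⟩
      simp only [ugDN, h, if_true, hf, Finset.mul_sum]
    · have hf : f ∉ Finset.image (eUG q) Finset.univ := by
        simp only [Finset.mem_image]
        rintro ⟨τ, -, rfl⟩
        exact h ⟨τ, rfl⟩
      simp only [ugDN, h, if_false, hf, zero_mul, Finset.sum_const_zero]
  rw [Finset.sum_congr rfl (fun f _ => key f), Finset.sum_ite_mem, Finset.univ_inter,
    Finset.sum_image (fun a _ b _ h => eUG_inj q h), Finset.mul_sum]

lemma sumDY (q : ℕ) [NeZero q] (g : ↥(UGFamily q) × (Fin 2 → ZMod q) → ℝ) :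
    ∑ p : ↥(UGFamily q) × (Fin 2 → ZMod q), ugDY q p * g p
      = ((q:ℝ)^2)⁻¹ * ∑ στ : ZMod q × ZMod q, g (eUG q στ.2, ![στ.1 + στ.2, στ.1]) := by
  set m : ZMod q × ZMod q → ↥(UGFamily q) × (Fin 2 → ZMod q) :=
    fun στ => (eUG q στ.2, ![στ.1 + στ.2, στ.1]) with hm
  have minj : Function.Injective m := by
    rintro ⟨σ, τ⟩ ⟨σ', τ'⟩ h
    have h1 : eUG q τ = eUG q τ' := congrArg Prod.fst h
    have hτ : τ = τ' := eUG_inj q h1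
    have h2 := congrArg Prod.snd h
    have hσ : σ = σ' := by simpa [hm] using congrFun h2 1
    simp [hσ, hτ]
  have key : ∀ p, ugDY q p * g p
      = if p ∈ Finset.image m Finset.univ then ((q:ℝ)^2)⁻¹ * g p else 0 := by
    intro p
    by_cases h : ∃ σ τ : ZMod q, (p.1 : (Fin 2 → ZMod q) → Bool) = fUG q τ ∧ p.2 = ![σ + τ, σ]
    · have hp : p ∈ Finset.image m Finset.univ := by
        obtain ⟨σ, τ, h1, h2⟩ := h
        refine Finset.mem_image.2 ⟨(σ, τ), Finset.mem_univ _, ?_⟩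
        exact Prod.ext (Subtype.ext h1.symm) h2.symm
      simp only [ugDY, h, if_true, hp]
    · have hp : p ∉ Finset.image m Finset.univ := by
        simp only [Finset.mem_image]
        rintro ⟨⟨σ, τ⟩, -, rfl⟩
        exact h ⟨σ, τ, rfl, rfl⟩
      simp only [ugDY, h, if_false, hp, zero_mul]
  rw [Finset.sum_congr rfl (fun p _ => key p), Finset.sum_ite_mem, Finset.univ_inter,
    Finset.sum_image (fun a _ b _ h => minj h), Finset.mul_sum]

lemma sum_pi_prod {α β : Type*} [Fintype α] [Fintype β] [DecidableEq α] (W : α → β → ℝ) :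
    ∑ c : α → β, ∏ a, W a (c a) = ∏ a, ∑ b, W a b := by
  rw [Finset.prod_univ_sum (fun _ => Finset.univ) W, Fintype.piFinset_univ]

lemma weight_one (q : ℕ) [NeZero q] (P : ZMod q → ZMod q → ℝ) (hP : ∀ σ, IsDist (P σ)) :
    ∑ b : Fin 2 → ZMod q → ZMod q, ∏ i, ∏ σ, P σ (b i σ) = 1 := by
  rw [sum_pi_prod (fun (_ : Fin 2) (c : ZMod q → ZMod q) => ∏ σ, P σ (c σ))]
  have h1 : ∑ c : ZMod q → ZMod q, ∏ σ, P σ (c σ) = 1 := by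
    rw [sum_pi_prod (fun σ x => P σ x)]
    simp [(hP _).2]
  simp [h1]

lemma sumDN_cVal (q : ℕ) [NeZero q] (b : Fin 2 → ZMod q → ZMod q) :
    ∑ p : ↥(UGFamily q) × (Fin 2 → ZMod q),
        ugDN q p * cVal (p.1 : (Fin 2 → ZMod q) → Bool) p.2 b = (q:ℝ)⁻¹ := by
  have hq0 : (q:ℝ) ≠ 0 := Nat.cast_ne_zero.2 (NeZero.ne q)
  rw [sumDN q (fun p => cVal (p.1 : (Fin 2 → ZMod q) → Bool) p.2 b), Finset.sum_comm]
  have inner : ∀ a : Fin 2 → ZMod q,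
      ∑ τ : ZMod q, cVal ((eUG q τ : ↥(UGFamily q)) : (Fin 2 → ZMod q) → Bool) a b = 1 := by
    intro a
    have h : ∀ τ : ZMod q, cVal ((eUG q τ : ↥(UGFamily q)) : (Fin 2 → ZMod q) → Bool) a b
        = if b 0 (a 0) - b 1 (a 1) = τ then 1 else 0 := by
      intro τ; simp [cVal, eUG, fUG]
    simp only [h]
    rw [Finset.sum_ite_eq]
    simp
  simp only [inner]
  rw [Finset.sum_const, Finset.card_univ]
  have hc : Fintype.card (Fin 2 → ZMod q) = q ^ 2 := by
    simp [ZMod.card]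
  rw [hc]
  simp only [nsmul_eq_mul]
  push_cast
  field_simp

lemma sumDY_cVal (q : ℕ) [NeZero q] :
    ∑ p : ↥(UGFamily q) × (Fin 2 → ZMod q),
      ugDY q p * cVal (p.1 : (Fin 2 → ZMod q) → Bool) p.2 (planted (ZMod q) 2) = 1 := by
  have hq0 : (q:ℝ) ≠ 0 := Nat.cast_ne_zero.2 (NeZero.ne q)
  rw [sumDY q (fun p => cVal (p.1 : (Fin 2 → ZMod q) → Bool) p.2 (planted (ZMod q) 2))]
  have h : ∀ στ : ZMod q × ZMod q,
      cVal ((eUG q στ.2 : ↥(UGFamily q)) : (Fin 2 → ZMod q) → Bool)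
        ![στ.1 + στ.2, στ.1] (planted (ZMod q) 2) = 1 := by
    rintro ⟨σ, τ⟩
    simp [cVal, eUG, fUG, planted]
  simp only [h]
  rw [Finset.sum_const, Finset.card_univ, Fintype.card_prod, ZMod.card]
  simp only [nsmul_eq_mul]
  push_cast
  field_simp

lemma isDist_ugDY (q : ℕ) [NeZero q] : IsDist (ugDY q) := by
  have hq0 : (q:ℝ) ≠ 0 := Nat.cast_ne_zero.2 (NeZero.ne q)
  constructor
  · intro x
    rw [ugDY]
    split_ifs
    · positivity
    · exact le_rfl
  · have : ∑ p : ↥(UGFamily q) × (Fin 2 → ZMod q), ugDY q p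
        = ∑ p : ↥(UGFamily q) × (Fin 2 → ZMod q), ugDY q p * (fun _ => (1:ℝ)) p := by
      simp
    rw [this, sumDY q (fun _ => (1:ℝ))]
    rw [Finset.sum_const, Finset.card_univ, Fintype.card_prod, ZMod.card]
    simp only [nsmul_eq_mul]
    push_cast
    field_simp

lemma isDist_ugDN (q : ℕ) [NeZero q] : IsDist (ugDN q) := by
  have hq0 : (q:ℝ) ≠ 0 := Nat.cast_ne_zero.2 (NeZero.ne q)
  constructor
  · intro x
    rw [ugDN]
    split_ifs
    · positivity
    · exact le_rfl
  · have : ∑ p : ↥(UGFamily q) × (Fin 2 → ZMod q), ugDN q p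
        = ∑ p : ↥(UGFamily q) × (Fin 2 → ZMod q), ugDN q p * (fun _ => (1:ℝ)) p := by
      simp
    rw [this, sumDN q (fun _ => (1:ℝ))]
    simp only [Finset.sum_const, Finset.card_univ, ZMod.card]
    have hc : Fintype.card (Fin 2 → ZMod q) = q ^ 2 := by simp [ZMod.card]
    rw [hc]
    simp only [nsmul_eq_mul]
    push_cast
    field_simp

lemma marginal_eq_sum {A : Type*} [Fintype A] {k : ℕ}
    (F : Finset ((Fin k → A) → Bool)) (D : ↥F × (Fin k → A) → ℝ) (x : ↥F × Fin k × A) :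
    marginal F D x
      = ∑ p : ↥F × (Fin k → A), D p * (if p.1 = x.1 ∧ p.2 x.2.1 = x.2.2 then 1 else 0) := by
  have h : ∑ p : ↥F × (Fin k → A), D p * (if p.1 = x.1 ∧ p.2 x.2.1 = x.2.2 then (1:ℝ) else 0)
      = ∑ f : ↥F, ∑ a : Fin k → A,
          (if f = x.1 then (if a x.2.1 = x.2.2 then D (f, a) else 0) else 0) := by
    rw [Fintype.sum_prod_type]
    refine Finset.sum_congr rfl fun f _ => Finset.sum_congr rfl fun a _ => ?_
    by_cases h1 : f = x.1 <;> by_cases h2 : a x.2.1 = x.2.2 <;> simp [h1, h2]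
  rw [h]
  rw [Fintype.sum_eq_single x.1 (fun f hf => by simp [hf])]
  simp [marginal]

lemma count_fiber (q : ℕ) [NeZero q] (i : Fin 2) (σ : ZMod q) :
    ∑ a : Fin 2 → ZMod q, (if a i = σ then (1:ℝ) else 0) = q := by
  have he := Fintype.sum_equiv ((piFinTwoEquiv (fun _ => ZMod q)).symm)
      (fun p : ZMod q × ZMod q =>
        if (piFinTwoEquiv (fun _ => ZMod q)).symm p i = σ then (1:ℝ) else 0)
      (fun a => if a i = σ then (1:ℝ) else 0) (fun p => rfl)
  rw [← he]
  fin_cases i <;>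
    simp only [piFinTwoEquiv, Equiv.coe_fn_symm_mk, Fin.mk_zero, Fin.mk_one, Fin.cons_zero,
      Fin.cons_one, Fintype.sum_prod_type, Fin.isValue]
  · have h0 : ∀ x : ZMod q, ∑ _y : ZMod q, (if x = σ then (1:ℝ) else 0)
        = if x = σ then (q:ℝ) else 0 := by
      intro x
      rw [Finset.sum_const, Finset.card_univ, ZMod.card]
      split_ifs <;> simp
    simp only [h0]
    rw [Finset.sum_ite_eq']
    simp
  · have h1 : ∑ y : ZMod q, (if y = σ then (1:ℝ) else 0) = 1 := by
      rw [Finset.sum_ite_eq']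
      simp
    simp only [h1]
    rw [Finset.sum_const, Finset.card_univ, ZMod.card]
    simp

lemma marg_eq (q : ℕ) [NeZero q] :
    marginal (UGFamily q) (ugDY q) = marginal (UGFamily q) (ugDN q) := by
  have hq0 : (q:ℝ) ≠ 0 := Nat.cast_ne_zero.2 (NeZero.ne q)
  funext x
  obtain ⟨f, i, σ⟩ := x
  rw [marginal_eq_sum, marginal_eq_sum, sumDY q _, sumDN q _]
  by_cases h : ∃ τ0 : ZMod q, f = eUG q τ0
  · obtain ⟨τ0, rfl⟩ := h
    simp only [Function.Injective.eq_iff (eUG_inj q), ite_and, Fintype.sum_prod_type]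
    have hL : ∀ σ' : ZMod q, (∑ τ : ZMod q, if τ = τ0 then
          (if (![σ' + τ, σ'] : Fin 2 → ZMod q) i = σ then (1:ℝ) else 0) else 0)
        = (if (![σ' + τ0, σ'] : Fin 2 → ZMod q) i = σ then (1:ℝ) else 0) := by
      intro σ'
      rw [Finset.sum_ite_eq']
      simp
    have hR : ∀ a : Fin 2 → ZMod q, (∑ τ : ZMod q, if τ = τ0 then
          (if a i = σ then (1:ℝ) else 0) else 0) = (if a i = σ then (1:ℝ) else 0) := by
      intro a
      rw [Finset.sum_ite_eq']
      simp
    simp only [hL]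
    rw [Finset.sum_comm]
    simp only [hR]
    rw [count_fiber q i σ]
    have hLs : (∑ σ' : ZMod q,
        if (![σ' + τ0, σ'] : Fin 2 → ZMod q) i = σ then (1:ℝ) else 0) = 1 := by
      fin_cases i
      · simp only [Fin.mk_zero, Matrix.cons_val_zero]
        have : ∀ σ' : ZMod q, (σ' + τ0 = σ) = (σ' = σ - τ0) := by
          intro σ'; rw [eq_sub_iff_add_eq]
        simp only [this]
        rw [Finset.sum_ite_eq']
        simp
      · simp only [Fin.mk_one, Matrix.cons_val_one, Matrix.head_cons]
        simp
    rw [hLs]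
    field_simp
  · have h1 : ∀ τ : ZMod q, eUG q τ ≠ f := fun τ ht => h ⟨τ, ht.symm⟩
    simp [h1]


set_option maxHeartbeats 1000000 in
/-- Example 2 of the paper (`Max-qUG`): the pair `(D^Y, D^N)` witnesses
`K_1^Y ∩ K_{1/q}^N ≠ ∅` for the Unique Games family. -/
theorem uniqueGames_hard_pair (q : ℕ) [NeZero q] (hq : 2 ≤ q) :
    ugDY q ∈ SY (UGFamily q) 1 ∧
    (∀ b : Fin 2 → ZMod q → ZMod q,
      (∑ p : ↥(UGFamily q) × (Fin 2 → ZMod q),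
        ugDN q p * cVal (p.1 : (Fin 2 → ZMod q) → Bool) p.2 b) = (q : ℝ)⁻¹) ∧
    ugDN q ∈ SN (UGFamily q) ((q : ℝ)⁻¹) ∧
    marginal (UGFamily q) (ugDY q) = marginal (UGFamily q) (ugDN q) := by
  refine ⟨⟨isDist_ugDY q, le_of_eq (sumDY_cVal q).symm⟩, fun b => sumDN_cVal q b,
    ⟨isDist_ugDN q, fun P hP => ?_⟩, marg_eq q⟩
  rw [show (fun a b : ZMod q => Classical.propDecidable (a = b)) = ZMod.decidableEq q
    from by funext a b; exact Subsingleton.elim _ _]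
  have hb : ∀ b : Fin 2 → ZMod q → ZMod q,
      ∑ p : ↥(UGFamily q) × (Fin 2 → ZMod q),
        ugDN q p * ((∏ i, ∏ σ, P σ (b i σ)) * cVal (p.1 : (Fin 2 → ZMod q) → Bool) p.2 b)
      = (∏ i, ∏ σ, P σ (b i σ)) * (q:ℝ)⁻¹ := by
    intro b
    rw [← sumDN_cVal q b, Finset.mul_sum]
    exact Finset.sum_congr rfl fun p _ => by ring
  calc ∑ p : ↥(UGFamily q) × (Fin 2 → ZMod q), ugDN q p * ∑ b : Fin 2 → ZMod q → ZMod q,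
          (∏ i, ∏ σ, P σ (b i σ)) * cVal (p.1 : (Fin 2 → ZMod q) → Bool) p.2 b
      = ∑ b : Fin 2 → ZMod q → ZMod q, ∑ p : ↥(UGFamily q) × (Fin 2 → ZMod q),
          ugDN q p * ((∏ i, ∏ σ, P σ (b i σ)) * cVal (p.1 : (Fin 2 → ZMod q) → Bool) p.2 b) := by
        simp only [Finset.mul_sum]
        rw [Finset.sum_comm]
    _ = ∑ b : Fin 2 → ZMod q → ZMod q, (∏ i, ∏ σ, P σ (b i σ)) * (q:ℝ)⁻¹ := by simp only [hb]
    _ = (q:ℝ)⁻¹ := by rw [← Finset.sum_mul, weight_one q P hP, one_mul]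
    _ ≤ (q:ℝ)⁻¹ := le_rfl
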